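/- Let V be a 2-dimensional complex Hilbert space and H an n-dimensional complex Hilbert space. Let {u_i}_{i=1}^{2n} be an orthonormal basis of V ⊗ H with each u_i = a_i ⊗ h_i, where a_i ∈ S(V) and h_i ∈ S(H). Then for each index i there exists an index j such that a_j is a scalar multiple of â_i, a unit vector of V orthogonal to a_i. -/
import Mathlib


open scoped ComplexInnerProductSpace

/-- Let `V` be a `2`-dimensional complex Hilbert space, `H` an `n`-dimensional complex
Hilbert space, and let `E = V ⊗ H` be their Hilbert-space tensor product (axiomatized
by a bilinear map `tp : V → H → E` with `⟪v ⊗ h, v' ⊗ h'⟫ = ⟪v, v'⟫⟪h, h'⟫` whose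
range spans `E`).  Let `(u i)_{i=1}^{2n}` be an orthonormal basis of `E` with each
`u i = a i ⊗ h i` a product of unit vectors.  Then for each index `i` there is an
index `j` such that `a j` is a scalar multiple of `â i`, a unit vector of `V`
orthogonal to `a i`. -/
theorem unentangled_gleason_stmt10
    {V H E : Type*}
    [NormedAddCommGroup V] [InnerProductSpace ℂ V]
    [NormedAddCommGroup H] [InnerProductSpace ℂ H]
    [NormedAddCommGroup E] [InnerProductSpace ℂ E]
    {n : ℕ} (hV : Module.finrank ℂ V = 2) (hH : Module.finrank ℂ H = n)
    (tp : V →ₗ[ℂ] H →ₗ[ℂ] E)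
    (htp_inner : ∀ (v v' : V) (h h' : H), ⟪tp v h, tp v' h'⟫ = ⟪v, v'⟫ * ⟪h, h'⟫)
    (htp_span : Submodule.span ℂ {x : E | ∃ v h, x = tp v h} = ⊤)
    (u : OrthonormalBasis (Fin (2 * n)) ℂ E)
    (a : Fin (2 * n) → V) (h : Fin (2 * n) → H)
    (ha : ∀ i, ‖a i‖ = 1) (hh : ∀ i, ‖h i‖ = 1)
    (hu : ∀ i, u i = tp (a i) (h i)) :
    ∀ i, ∃ j, ∃ (c : ℂ) (ahat : V),
      ‖ahat‖ = 1 ∧ ⟪a i, ahat⟫ = 0 ∧ a j = c • ahat := by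
  intro i
  by_cases hex : ∃ j, ⟪a i, a j⟫ = 0
  · obtain ⟨j, hj⟩ := hex
    exact ⟨j, 1, a j, ha j, hj, (one_smul ℂ (a j)).symm⟩
  exfalso
  push_neg at hex
  haveI : FiniteDimensional ℂ V := FiniteDimensional.of_finrank_eq_succ hV
  have hai : a i ≠ 0 := by
    intro h0
    have := ha i
    rw [h0, norm_zero] at this
    norm_num at this
  -- construct a unit vector b orthogonal to a i
  set K : Submodule ℂ V := ℂ ∙ (a i) with hK
  have hKrank : Module.finrank ℂ K = 1 := finrank_span_singleton hai
  have hKorth : Module.finrank ℂ Kᗮ = 1 := by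
    have := Submodule.finrank_add_finrank_orthogonal (K := K)
    omega
  have hKbot : Kᗮ ≠ ⊥ := by
    intro heq
    rw [heq] at hKorth
    simp at hKorth
  obtain ⟨v, hv, hvne⟩ := Submodule.exists_mem_ne_zero_of_ne_bot hKbot
  set b : V := ((‖v‖ : ℂ))⁻¹ • v with hb
  have hvnorm : (‖v‖ : ℂ) ≠ 0 := by
    simpa using norm_ne_zero_iff.mpr hvne
  have hbnorm : ‖b‖ = 1 := by
    rw [hb, norm_smul]
    simp [norm_ne_zero_iff.mpr hvne, inv_mul_cancel₀ (norm_ne_zero_iff.mpr hvne)]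
  have hborth : ⟪a i, b⟫ = 0 := by
    have h0 : ⟪a i, v⟫ = 0 :=
      hv (a i) (Submodule.mem_span_singleton_self (a i))
    rw [hb, inner_smul_right, h0, mul_zero]
  -- orthogonality of the h's
  have horthH : ∀ j, j ≠ i → ⟪h j, h i⟫ = 0 := by
    intro j hji
    have h2 : ⟪u j, u i⟫ = 0 := u.orthonormal.2 hji
    rw [hu j, hu i, htp_inner] at h2
    have haji : ⟪a j, a i⟫ ≠ 0 := by
      intro h0
      apply hex j
      rw [← inner_conj_symm, h0, map_zero]
    exact (mul_eq_zero.mp h2).resolve_left haji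
  -- the vector w = tp b (h i) is orthogonal to all basis vectors
  set w : E := tp b (h i) with hw
  have hwzero : w = 0 := by
    apply u.repr.injective
    rw [map_zero]
    ext j
    show u.repr w j = 0
    rw [u.repr_apply_apply, hw, hu j, htp_inner]
    rcases eq_or_ne j i with rfl | hji
    · rw [hborth, zero_mul]
    · rw [horthH j hji, mul_zero]
  have hwnorm : (⟪w, w⟫ : ℂ) = 1 := by
    rw [hw, htp_inner, inner_self_eq_norm_sq_to_K, inner_self_eq_norm_sq_to_K,
      hbnorm, hh i]
    norm_num
  rw [hwzero, inner_zero_left] at hwnorm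
  exact zero_ne_one hwnorm
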